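/- arXiv:2009.04224 — 4 statements merged into one kernel-verified Lean document; each statement's English description precedes it below -/
import Mathlib

section
/- In the sensor MDP, the optimal state-value function v*(b, Δ) is non-decreasing in the AoI Δ: for fixed battery level b, Δ ≤ Δ̄ implies v*(b, Δ) ≤ v*(b, Δ̄). This follows by induction on value iteration: if v⁽ⁿ⁾ is non-decreasing in Δ, so is v⁽ⁿ⁺¹⁾ = T v⁽ⁿ⁾, and monotonicity is preserved in the limit. -/
/-- Optimal action-value function form for the sensor MDP: expected immediate
cost (weight `β` times the next-slot AoI) plus discounted next-state value,
for state `(b, Δ)` and action `a ∈ {0,1}`. -/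
noncomputable def Qsens (B Δmax : ℕ) (lam xi β γ : ℝ) (v : ℕ × ℕ → ℝ)
    (b Δ : ℕ) (a : ℕ) : ℝ :=
  let m : ℕ := min (Δ + 1) Δmax
  if a = 0 then
    if b < B then
      lam * (β * (m : ℝ) + γ * v (b + 1, m))
        + (1 - lam) * (β * (m : ℝ) + γ * v (b, m))
    else
      β * (m : ℝ) + γ * v (B, m)
  else
    if b = 0 then
      lam * (β * (m : ℝ) + γ * v (1, m))
        + (1 - lam) * (β * (m : ℝ) + γ * v (0, m))
    else
      lam * xi * (β * 1 + γ * v (b, 1))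
        + lam * (1 - xi) * (β * (m : ℝ) + γ * v (b, m))
        + (1 - lam) * xi * (β * 1 + γ * v (b - 1, 1))
        + (1 - lam) * (1 - xi) * (β * (m : ℝ) + γ * v (b - 1, m))

lemma contraction_aux {M γ : ℝ} (h : M ≤ γ * M) (_h0 : 0 ≤ M) (h1 : γ < 1) :
    M ≤ 0 := by nlinarith

lemma min_sub_le_aux {x0 x1 y0 y1 c : ℝ} (h0 : x0 ≤ y0 + c) (h1 : x1 ≤ y1 + c) :
    min x0 x1 ≤ min y0 y1 + c := by
  rcases le_total y0 y1 with h | h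
  · rw [min_eq_left h]; exact le_trans (min_le_left _ _) h0
  · rw [min_eq_right h]; exact le_trans (min_le_right _ _) h1

set_option maxHeartbeats 1600000 in
/-- The optimal state-value function of the sensor MDP is non-decreasing in
the AoI. -/
theorem vstar_monotone_in_AoI (B Δmax : ℕ) (hB : 1 ≤ B) (hΔmax : 1 ≤ Δmax)
    (lam xi β γ : ℝ)
    (hlam : 0 ≤ lam ∧ lam ≤ 1) (hxi : 0 ≤ xi ∧ xi ≤ 1)
    (hβ : 0 ≤ β) (hγ : 0 ≤ γ ∧ γ < 1)
    (vstar : ℕ × ℕ → ℝ)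
    (hfix : ∀ b Δ, b ≤ B → 1 ≤ Δ → Δ ≤ Δmax →
      vstar (b, Δ) = min (Qsens B Δmax lam xi β γ vstar b Δ 0)
        (Qsens B Δmax lam xi β γ vstar b Δ 1)) :
    ∀ b Δ Δ', b ≤ B → 1 ≤ Δ → Δ ≤ Δ' → Δ' ≤ Δmax →
      vstar (b, Δ) ≤ vstar (b, Δ') := by
  obtain ⟨hlam0, hlam1⟩ := hlam
  obtain ⟨hxi0, hxi1⟩ := hxi
  obtain ⟨hγ0, hγ1⟩ := hγ
  classical
  set S : Finset (ℕ × ℕ × ℕ) :=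
    ((Finset.range (B+1)) ×ˢ (Finset.Icc 1 Δmax) ×ˢ (Finset.Icc 1 Δmax)).filter
      (fun p => p.2.1 ≤ p.2.2) with hS
  have memS : ∀ p : ℕ × ℕ × ℕ,
      p ∈ S ↔ p.1 ≤ B ∧ 1 ≤ p.2.1 ∧ p.2.1 ≤ p.2.2 ∧ p.2.2 ≤ Δmax := by
    intro p
    simp only [hS, Finset.mem_filter, Finset.mem_product, Finset.mem_range,
      Finset.mem_Icc, Nat.lt_succ_iff]
    omega
  have hne : S.Nonempty := ⟨(0, 1, 1), (memS _).2 ⟨Nat.zero_le B, le_refl 1, le_refl 1, hΔmax⟩⟩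
  obtain ⟨f, hf⟩ : ∃ f : ℕ × ℕ × ℕ → ℝ,
      f = fun p => vstar (p.1, p.2.1) - vstar (p.1, p.2.2) := ⟨_, rfl⟩
  obtain ⟨M, hMdef⟩ : ∃ M : ℝ, M = S.sup' hne f := ⟨_, rfl⟩
  have hle : ∀ p ∈ S, f p ≤ M := fun p hp => hMdef ▸ Finset.le_sup' f hp
  have hM0 : 0 ≤ M := by
    have := hle (0, 1, 1) ((memS _).2 ⟨Nat.zero_le B, le_refl 1, le_refl 1, hΔmax⟩)
    rw [hf] at this
    simpa using this
  have key : ∀ p ∈ S, f p ≤ γ * M := by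
    rintro ⟨b, Δ, Δ'⟩ hp
    obtain ⟨hb, h1, h12, h2⟩ := (memS _).1 hp
    replace hb : b ≤ B := hb
    replace h1 : 1 ≤ Δ := h1
    replace h12 : Δ ≤ Δ' := h12
    replace h2 : Δ' ≤ Δmax := h2
    set m := min (Δ + 1) Δmax with hm
    set m' := min (Δ' + 1) Δmax with hm'
    have hmm' : m ≤ m' := by omega
    have hm1 : 1 ≤ m := by omega
    have hm2 : m' ≤ Δmax := by omega
    have hmr : (m : ℝ) ≤ (m' : ℝ) := by exact_mod_cast hmm'
    have hβm : β * (m : ℝ) ≤ β * (m' : ℝ) := mul_le_mul_of_nonneg_left hmr hβ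
    have dle : ∀ b₂, b₂ ≤ B → vstar (b₂, m) - vstar (b₂, m') ≤ M := by
      intro b₂ hb₂
      have h := hle (b₂, m, m') ((memS _).2 ⟨hb₂, hm1, hmm', hm2⟩)
      rw [hf] at h
      exact h
    have hA0 : Qsens B Δmax lam xi β γ vstar b Δ 0
        ≤ Qsens B Δmax lam xi β γ vstar b Δ' 0 + γ * M := by
      rcases Nat.lt_or_ge b B with hbB | hbB
      · simp only [Qsens, if_pos rfl, if_pos hbB, if_true, ← hm, ← hm']
        have t1 := mul_le_mul_of_nonneg_left (dle (b+1) (by omega))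
          (mul_nonneg hlam0 hγ0)
        have t2 := mul_le_mul_of_nonneg_left (dle b hb)
          (mul_nonneg (by linarith : (0:ℝ) ≤ 1 - lam) hγ0)
        nlinarith [t1, t2, hβm, hlam0, hlam1, hγ0, hM0]
      · simp only [Qsens, if_pos rfl, if_neg (not_lt.2 hbB), if_true, ← hm, ← hm']
        have t1 := mul_le_mul_of_nonneg_left (dle B le_rfl) hγ0
        nlinarith [t1, hβm]
    have hA1 : Qsens B Δmax lam xi β γ vstar b Δ 1
        ≤ Qsens B Δmax lam xi β γ vstar b Δ' 1 + γ * M := by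
      rcases Nat.eq_zero_or_pos b with hb0 | hb0
      · subst hb0
        simp only [Qsens, if_neg (by norm_num : (1:ℕ) ≠ 0), if_pos rfl, if_true, ← hm, ← hm']
        have t1 := mul_le_mul_of_nonneg_left (dle 1 hB)
          (mul_nonneg hlam0 hγ0)
        have t2 := mul_le_mul_of_nonneg_left (dle 0 (by omega))
          (mul_nonneg (by linarith : (0:ℝ) ≤ 1 - lam) hγ0)
        nlinarith [t1, t2, hβm, hlam0, hlam1, hγ0, hM0]
      · have hb0' : b ≠ 0 := Nat.pos_iff_ne_zero.mp hb0
        simp only [Qsens, if_neg (by norm_num : (1:ℕ) ≠ 0), if_neg hb0', if_true, ← hm, ← hm']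
        have t1 := mul_le_mul_of_nonneg_left (dle b hb)
          (mul_nonneg (mul_nonneg hlam0 (by linarith : (0:ℝ) ≤ 1 - xi)) hγ0)
        have t2 := mul_le_mul_of_nonneg_left (dle (b-1) (by omega))
          (mul_nonneg (mul_nonneg (by linarith : (0:ℝ) ≤ 1 - lam)
            (by linarith : (0:ℝ) ≤ 1 - xi)) hγ0)
        have t3 := mul_le_mul_of_nonneg_left hβm
          (mul_nonneg hlam0 (by linarith : (0:ℝ) ≤ 1 - xi))
        have t4 := mul_le_mul_of_nonneg_left hβm
          (mul_nonneg (by linarith : (0:ℝ) ≤ 1 - lam)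
            (by linarith : (0:ℝ) ≤ 1 - xi))
        have t5 : 0 ≤ xi * γ * M := mul_nonneg (mul_nonneg hxi0 hγ0) hM0
        nlinarith [t1, t2, t3, t4, t5]
    have hΔm : Δ ≤ Δmax := le_trans h12 h2
    have h1' : 1 ≤ Δ' := le_trans h1 h12
    rw [hf]
    show vstar (b, Δ) - vstar (b, Δ') ≤ γ * M
    rw [hfix b Δ hb h1 hΔm, hfix b Δ' hb h1' h2]
    generalize Qsens B Δmax lam xi β γ vstar b Δ 0 = x0 at hA0 ⊢
    generalize Qsens B Δmax lam xi β γ vstar b Δ 1 = x1 at hA1 ⊢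
    generalize Qsens B Δmax lam xi β γ vstar b Δ' 0 = y0 at hA0 ⊢
    generalize Qsens B Δmax lam xi β γ vstar b Δ' 1 = y1 at hA1 ⊢
    exact sub_le_iff_le_add'.2 (min_sub_le_aux hA0 hA1)
  obtain ⟨p, hp, hpM⟩ := Finset.exists_mem_eq_sup' hne f
  have hMeq : M = f p := by rw [hMdef, hpM]
  have hMγ : M ≤ γ * M := hMeq.le.trans (key p hp)
  have hMle : M ≤ 0 := contraction_aux hMγ hM0 hγ1
  intro b Δ Δ' hb h1 h12 h2
  have h := hle (b, Δ, Δ') ((memS _).2 ⟨hb, h1, h12, h2⟩)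
  rw [hf] at h
  have h' : vstar (b, Δ) - vstar (b, Δ') ≤ M := h
  exact sub_nonpos.1 (h'.trans hMle)
end

section
/- In the sensor MDP, the optimal state-value function v*(b, Δ) is non-increasing in the battery level b: for fixed AoI Δ, b ≤ b̄ implies v*(b̄, Δ) ≤ v*(b, Δ). -/
lemma Qs0_lt (B Δmax : ℕ) (lam xi β γ : ℝ) (v : ℕ × ℕ → ℝ) (b Δ : ℕ)
    (h : b < B) :
    Qsens B Δmax lam xi β γ v b Δ 0 =
      lam * (β * ((min (Δ+1) Δmax : ℕ) : ℝ) + γ * v (b+1, min (Δ+1) Δmax))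
      + (1-lam) * (β * ((min (Δ+1) Δmax : ℕ) : ℝ) + γ * v (b, min (Δ+1) Δmax)) := by
  simp [Qsens, h]

lemma Qs0_top (B Δmax : ℕ) (lam xi β γ : ℝ) (v : ℕ × ℕ → ℝ) (Δ : ℕ) :
    Qsens B Δmax lam xi β γ v B Δ 0 =
      β * ((min (Δ+1) Δmax : ℕ) : ℝ) + γ * v (B, min (Δ+1) Δmax) := by
  simp [Qsens]

lemma Qs1_zero (B Δmax : ℕ) (lam xi β γ : ℝ) (v : ℕ × ℕ → ℝ) (Δ : ℕ) :
    Qsens B Δmax lam xi β γ v 0 Δ 1 =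
      lam * (β * ((min (Δ+1) Δmax : ℕ) : ℝ) + γ * v (1, min (Δ+1) Δmax))
      + (1-lam) * (β * ((min (Δ+1) Δmax : ℕ) : ℝ) + γ * v (0, min (Δ+1) Δmax)) := by
  simp [Qsens]

lemma Qs1_pos (B Δmax : ℕ) (lam xi β γ : ℝ) (v : ℕ × ℕ → ℝ) (b Δ : ℕ)
    (h : b ≠ 0) :
    Qsens B Δmax lam xi β γ v b Δ 1 =
      lam * xi * (β * 1 + γ * v (b, 1))
      + lam * (1 - xi) * (β * ((min (Δ+1) Δmax : ℕ) : ℝ) + γ * v (b, min (Δ+1) Δmax))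
      + (1 - lam) * xi * (β * 1 + γ * v (b - 1, 1))
      + (1 - lam) * (1 - xi) * (β * ((min (Δ+1) Δmax : ℕ) : ℝ) + γ * v (b - 1, min (Δ+1) Δmax)) := by
  simp [Qsens, h]

/-- The optimal state-value function of the sensor MDP is non-increasing in
the battery level. -/
theorem vstar_antitone_in_battery (B Δmax : ℕ) (hB : 1 ≤ B) (hΔmax : 1 ≤ Δmax)
    (lam xi β γ : ℝ)
    (hlam : 0 ≤ lam ∧ lam ≤ 1) (hxi : 0 ≤ xi ∧ xi ≤ 1)
    (hβ : 0 ≤ β) (hγ : 0 ≤ γ ∧ γ < 1)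
    (vstar : ℕ × ℕ → ℝ)
    (hfix : ∀ b Δ, b ≤ B → 1 ≤ Δ → Δ ≤ Δmax →
      vstar (b, Δ) = min (Qsens B Δmax lam xi β γ vstar b Δ 0)
        (Qsens B Δmax lam xi β γ vstar b Δ 1)) :
    ∀ b b' Δ, b ≤ b' → b' ≤ B → 1 ≤ Δ → Δ ≤ Δmax →
      vstar (b', Δ) ≤ vstar (b, Δ) := by
  obtain ⟨hlam0, hlam1⟩ := hlam
  obtain ⟨hxi0, hxi1⟩ := hxi
  obtain ⟨hγ0, hγ1⟩ := hγ
  classical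
  set S : Finset (ℕ × ℕ × ℕ) :=
    ((Finset.range (B+1)) ×ˢ (Finset.range (B+1)) ×ˢ (Finset.Icc 1 Δmax)).filter
      (fun p => p.1 ≤ p.2.1) with hS
  have hSne : S.Nonempty := ⟨(0, 0, 1), by simp [hS, hΔmax]⟩
  set f : ℕ × ℕ × ℕ → ℝ := fun p => vstar (p.2.1, p.2.2) - vstar (p.1, p.2.2) with hf
  set M : ℝ := (S.image f).max' (hSne.image f) with hM
  have hmem : ∀ b b' Δ, b ≤ b' → b' ≤ B → 1 ≤ Δ → Δ ≤ Δmax →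
      vstar (b', Δ) - vstar (b, Δ) ≤ M := by
    intro b b' Δ h1 h2 h3 h4
    have : f (b, b', Δ) ≤ M := by
      apply Finset.le_max'
      exact Finset.mem_image.2 ⟨(b, b', Δ), by
        simp only [hS, Finset.mem_filter, Finset.mem_product, Finset.mem_range,
          Finset.mem_Icc]
        omega, rfl⟩
    simpa [hf] using this
  have hM0 : 0 ≤ M := by
    have := hmem 0 0 1 le_rfl (by omega) le_rfl hΔmax
    linarith
  -- key contraction step
  have hkey : ∀ b b' Δ, b ≤ b' → b' ≤ B → 1 ≤ Δ → Δ ≤ Δmax →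
      vstar (b', Δ) - vstar (b, Δ) ≤ γ * M := by
    intro b b' Δ h1 h2 h3 h4
    have hm1 : 1 ≤ min (Δ+1) Δmax := le_min (by omega) hΔmax
    have hm2 : min (Δ+1) Δmax ≤ Δmax := min_le_right _ _
    set m : ℕ := min (Δ+1) Δmax with hmdef
    have hbB : b ≤ B := h1.trans h2
    -- action-0 bound
    have HA0 : Qsens B Δmax lam xi β γ vstar b' Δ 0
        - Qsens B Δmax lam xi β γ vstar b Δ 0 ≤ γ * M := by
      rcases lt_or_eq_of_le h2 with hb'B | hb'B
      · have hbltB : b < B := lt_of_le_of_lt h1 hb'B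
        rw [Qs0_lt B Δmax lam xi β γ vstar b' Δ hb'B,
          Qs0_lt B Δmax lam xi β γ vstar b Δ hbltB]
        have d1 := hmem (b+1) (b'+1) m (by omega) (by omega) hm1 hm2
        have d2 := hmem b b' m h1 (le_of_lt hb'B) hm1 hm2
        have c1 : 0 ≤ lam * γ := mul_nonneg hlam0 hγ0
        have c2 : (0:ℝ) ≤ (1 - lam) * γ := mul_nonneg (by linarith) hγ0
        nlinarith [mul_le_mul_of_nonneg_left d1 c1, mul_le_mul_of_nonneg_left d2 c2]
      · rcases lt_or_eq_of_le h1 with hbB' | hbB'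
        · rw [hb'B, Qs0_top B Δmax lam xi β γ vstar Δ,
            Qs0_lt B Δmax lam xi β γ vstar b Δ (by omega)]
          have d1 := hmem (b+1) B m (by omega) le_rfl hm1 hm2
          have d2 := hmem b B m (by omega) le_rfl hm1 hm2
          have c1 : 0 ≤ lam * γ := mul_nonneg hlam0 hγ0
          have c2 : (0:ℝ) ≤ (1 - lam) * γ := mul_nonneg (by linarith) hγ0
          nlinarith [mul_le_mul_of_nonneg_left d1 c1, mul_le_mul_of_nonneg_left d2 c2]
        · rw [hbB']
          have : (0:ℝ) ≤ γ * M := mul_nonneg hγ0 hM0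
          linarith
    -- at battery 0 the two actions coincide
    have Hzero : b = 0 →
        Qsens B Δmax lam xi β γ vstar b Δ 1 = Qsens B Δmax lam xi β γ vstar b Δ 0 := by
      intro hb0; subst hb0
      rw [Qs1_zero B Δmax lam xi β γ vstar Δ,
        Qs0_lt B Δmax lam xi β γ vstar 0 Δ (by omega)]
    -- action-1 bound when battery positive
    have HA1 : 1 ≤ b → Qsens B Δmax lam xi β γ vstar b' Δ 1
        - Qsens B Δmax lam xi β γ vstar b Δ 1 ≤ γ * M := by
      intro hb1
      have hb'1 : 1 ≤ b' := hb1.trans h1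
      rw [Qs1_pos B Δmax lam xi β γ vstar b' Δ (by omega),
        Qs1_pos B Δmax lam xi β γ vstar b Δ (by omega)]
      have d1 := hmem b b' 1 h1 h2 le_rfl hΔmax
      have d2 := hmem b b' m h1 h2 hm1 hm2
      have d3 := hmem (b-1) (b'-1) 1 (by omega) (by omega) le_rfl hΔmax
      have d4 := hmem (b-1) (b'-1) m (by omega) (by omega) hm1 hm2
      have c1 : 0 ≤ lam * xi * γ := mul_nonneg (mul_nonneg hlam0 hxi0) hγ0
      have c2 : (0:ℝ) ≤ lam * (1 - xi) * γ :=
        mul_nonneg (mul_nonneg hlam0 (by linarith)) hγ0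
      have c3 : (0:ℝ) ≤ (1 - lam) * xi * γ :=
        mul_nonneg (mul_nonneg (by linarith) hxi0) hγ0
      have c4 : (0:ℝ) ≤ (1 - lam) * (1 - xi) * γ :=
        mul_nonneg (mul_nonneg (by linarith) (by linarith)) hγ0
      nlinarith [mul_le_mul_of_nonneg_left d1 c1, mul_le_mul_of_nonneg_left d2 c2,
        mul_le_mul_of_nonneg_left d3 c3, mul_le_mul_of_nonneg_left d4 c4]
    rw [hfix b Δ hbB h3 h4, hfix b' Δ h2 h3 h4]
    rcases Nat.eq_zero_or_pos b with hb0 | hb1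
    · rw [Hzero hb0, min_self]
      have h5 : min (Qsens B Δmax lam xi β γ vstar b' Δ 0)
          (Qsens B Δmax lam xi β γ vstar b' Δ 1)
          ≤ Qsens B Δmax lam xi β γ vstar b' Δ 0 := min_le_left _ _
      linarith
    · rcases le_total (Qsens B Δmax lam xi β γ vstar b Δ 0)
        (Qsens B Δmax lam xi β γ vstar b Δ 1) with hx | hx
      · rw [min_eq_left hx]
        have h5 : min (Qsens B Δmax lam xi β γ vstar b' Δ 0)
            (Qsens B Δmax lam xi β γ vstar b' Δ 1)
            ≤ Qsens B Δmax lam xi β γ vstar b' Δ 0 := min_le_left _ _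
        linarith
      · rw [min_eq_right hx]
        have h5 : min (Qsens B Δmax lam xi β γ vstar b' Δ 0)
            (Qsens B Δmax lam xi β γ vstar b' Δ 1)
            ≤ Qsens B Δmax lam xi β γ vstar b' Δ 1 := min_le_right _ _
        have := HA1 hb1
        linarith
  -- M ≤ γ M at the maximizer
  have hMγ : M ≤ γ * M := by
    have hmax : M ∈ S.image f := Finset.max'_mem _ _
    obtain ⟨p, hpS, hpf⟩ := Finset.mem_image.1 hmax
    simp only [hS, Finset.mem_filter, Finset.mem_product, Finset.mem_range,
      Finset.mem_Icc] at hpS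
    have hle := hkey p.1 p.2.1 p.2.2 hpS.2 (by omega) hpS.1.2.2.1 hpS.1.2.2.2
    calc M = f p := hpf.symm
    _ ≤ γ * M := hle
  have hMle : M ≤ 0 := by
    rcases hM0.eq_or_lt with h | h
    · linarith
    · have := mul_lt_mul_of_pos_right hγ1 h
      simp at this
      linarith
  intro b b' Δ h1 h2 h3 h4
  have := hmem b b' Δ h1 h2 h3 h4
  linarith
end

section
/- In the sensor MDP with error-free channel ξ = 1, the advantage function δq*(b, Δ) = q*((b,Δ),1) − q*((b,Δ),0) is non-increasing in the AoI Δ: for fixed b, Δ ≤ Δ̄ implies δq*(b, Δ̄) ≤ δq*(b, Δ). -/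
lemma Q0_lt (B Δmax : ℕ) (lam β γ : ℝ) (v : ℕ × ℕ → ℝ) (b Δ : ℕ) (hb : b < B) :
    Qsens B Δmax lam 1 β γ v b Δ 0
      = lam * (β * (min (Δ+1) Δmax : ℕ) + γ * v (b + 1, min (Δ+1) Δmax))
        + (1 - lam) * (β * (min (Δ+1) Δmax : ℕ) + γ * v (b, min (Δ+1) Δmax)) := by
  simp [Qsens, hb]

lemma Q0_eq (B Δmax : ℕ) (lam β γ : ℝ) (v : ℕ × ℕ → ℝ) (Δ : ℕ) :
    Qsens B Δmax lam 1 β γ v B Δ 0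
      = β * (min (Δ+1) Δmax : ℕ) + γ * v (B, min (Δ+1) Δmax) := by
  simp [Qsens]

lemma Q1_zero (B Δmax : ℕ) (lam β γ : ℝ) (v : ℕ × ℕ → ℝ) (Δ : ℕ) :
    Qsens B Δmax lam 1 β γ v 0 Δ 1
      = lam * (β * (min (Δ+1) Δmax : ℕ) + γ * v (1, min (Δ+1) Δmax))
        + (1 - lam) * (β * (min (Δ+1) Δmax : ℕ) + γ * v (0, min (Δ+1) Δmax)) := by
  simp [Qsens]

lemma Q1_pos (B Δmax : ℕ) (lam β γ : ℝ) (v : ℕ × ℕ → ℝ) (b Δ : ℕ) (hb : b ≠ 0) :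
    Qsens B Δmax lam 1 β γ v b Δ 1
      = lam * (β + γ * v (b, 1)) + (1 - lam) * (β + γ * v (b - 1, 1)) := by
  simp [Qsens, hb]

lemma vstar_mono (B Δmax : ℕ) (hB : 1 ≤ B) (hΔmax : 1 ≤ Δmax)
    (lam β γ : ℝ)
    (hlam : 0 ≤ lam ∧ lam ≤ 1)
    (hβ : 0 ≤ β) (hγ : 0 ≤ γ ∧ γ < 1)
    (vstar : ℕ × ℕ → ℝ)
    (hfix : ∀ b Δ, b ≤ B → 1 ≤ Δ → Δ ≤ Δmax →
      vstar (b, Δ) = min (Qsens B Δmax lam 1 β γ vstar b Δ 0)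
        (Qsens B Δmax lam 1 β γ vstar b Δ 1)) :
    ∀ b Δ Δ', b ≤ B → 1 ≤ Δ → Δ ≤ Δ' → Δ' ≤ Δmax →
      vstar (b, Δ) ≤ vstar (b, Δ') := by
  obtain ⟨hl0, hl1⟩ := hlam
  obtain ⟨hg0, hg1⟩ := hγ
  set f : ℕ × ℕ × ℕ → ℝ := fun t =>
    if t.1 ≤ B ∧ 1 ≤ t.2.1 ∧ t.2.1 ≤ t.2.2 ∧ t.2.2 ≤ Δmax then
      vstar (t.1, t.2.1) - vstar (t.1, t.2.2) else 0 with hf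
  set T : Finset (ℕ × ℕ × ℕ) :=
    Finset.range (B+1) ×ˢ Finset.range (Δmax+1) ×ˢ Finset.range (Δmax+1) with hT
  have hTne : T.Nonempty := ⟨(0,0,0), by simp [hT]⟩
  set D : ℝ := T.sup' hTne f with hD
  have hD0 : 0 ≤ D := by
    have : f (0,0,0) ≤ D := Finset.le_sup' f (by simp [hT])
    simpa [hf] using this
  have hub : ∀ b Δ Δ', b ≤ B → 1 ≤ Δ → Δ ≤ Δ' → Δ' ≤ Δmax →
      vstar (b, Δ) - vstar (b, Δ') ≤ D := by
    intro b Δ Δ' hb h1 h12 h2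
    have hmem : (b, Δ, Δ') ∈ T := by
      simp [hT]
      exact ⟨by omega, by omega, by omega⟩
    have h : f (b, Δ, Δ') ≤ D := Finset.le_sup' f hmem
    simp only [hf] at h
    rwa [if_pos ⟨hb, h1, h12, h2⟩] at h
  -- key contraction step
  have hkey : ∀ b Δ Δ', b ≤ B → 1 ≤ Δ → Δ ≤ Δ' → Δ' ≤ Δmax →
      vstar (b, Δ) - vstar (b, Δ') ≤ γ * D := by
    intro b Δ Δ' hb h1 h12 h2
    set m : ℕ := min (Δ+1) Δmax with hm
    set m' : ℕ := min (Δ'+1) Δmax with hm'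
    have hm1 : 1 ≤ m := by omega
    have hmm' : m ≤ m' := by omega
    have hm'2 : m' ≤ Δmax := by omega
    have hmr : (m : ℝ) ≤ (m' : ℝ) := by exact_mod_cast hmm'
    have hgD : 0 ≤ γ * D := mul_nonneg hg0 hD0
    rw [hfix b Δ hb h1 (le_trans h12 h2), hfix b Δ' hb (le_trans h1 h12) h2]
    rcases Nat.eq_zero_or_pos b with hb0 | hbpos
    · subst hb0
      have hbB : 0 < B := hB
      rw [Q0_lt B Δmax lam β γ vstar 0 Δ hbB, Q0_lt B Δmax lam β γ vstar 0 Δ' hbB,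
          Q1_zero, Q1_zero]
      have d1 : vstar (0+1, m) - vstar (0+1, m') ≤ D := hub 1 m m' hB hm1 hmm' hm'2
      have d0 : vstar (0, m) - vstar (0, m') ≤ D := hub 0 m m' (by omega) hm1 hmm' hm'2
      have e1 : lam * (vstar (0+1, m) - vstar (0+1, m')) ≤ lam * D :=
        mul_le_mul_of_nonneg_left d1 hl0
      have e0 : (1-lam) * (vstar (0, m) - vstar (0, m')) ≤ (1-lam) * D :=
        mul_le_mul_of_nonneg_left d0 (by linarith)
      have hβm : β * (m:ℝ) ≤ β * (m':ℝ) := mul_le_mul_of_nonneg_left hmr hβ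
      simp only [min_self]
      nlinarith [mul_le_mul_of_nonneg_left e1 hg0, mul_le_mul_of_nonneg_left e0 hg0]
    · have hbne : b ≠ 0 := by omega
      rw [Q1_pos B Δmax lam β γ vstar b Δ hbne, Q1_pos B Δmax lam β γ vstar b Δ' hbne]
      set q1 : ℝ := lam * (β + γ * vstar (b, 1)) + (1 - lam) * (β + γ * vstar (b - 1, 1))
      have hq0 : Qsens B Δmax lam 1 β γ vstar b Δ 0
          - Qsens B Δmax lam 1 β γ vstar b Δ' 0 ≤ γ * D := by
        rcases lt_or_eq_of_le hb with hlt | heq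
        · rw [Q0_lt B Δmax lam β γ vstar b Δ hlt, Q0_lt B Δmax lam β γ vstar b Δ' hlt]
          have d1 : vstar (b+1, m) - vstar (b+1, m') ≤ D := hub (b+1) m m' (by omega) hm1 hmm' hm'2
          have d0 : vstar (b, m) - vstar (b, m') ≤ D := hub b m m' hb hm1 hmm' hm'2
          have e1 : lam * (vstar (b+1, m) - vstar (b+1, m')) ≤ lam * D :=
            mul_le_mul_of_nonneg_left d1 hl0
          have e0 : (1-lam) * (vstar (b, m) - vstar (b, m')) ≤ (1-lam) * D :=
            mul_le_mul_of_nonneg_left d0 (by linarith)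
          have hβm : β * (m:ℝ) ≤ β * (m':ℝ) := mul_le_mul_of_nonneg_left hmr hβ
          nlinarith [mul_le_mul_of_nonneg_left e1 hg0, mul_le_mul_of_nonneg_left e0 hg0]
        · subst heq
          rw [Q0_eq, Q0_eq]
          have d0 : vstar (b, m) - vstar (b, m') ≤ D := hub b m m' le_rfl hm1 hmm' hm'2
          have hβm : β * (m:ℝ) ≤ β * (m':ℝ) := mul_le_mul_of_nonneg_left hmr hβ
          nlinarith [mul_le_mul_of_nonneg_left d0 hg0]
      rcases min_cases (Qsens B Δmax lam 1 β γ vstar b Δ' 0) q1 with ⟨h, _⟩ | ⟨h, _⟩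
      · rw [h]
        calc min (Qsens B Δmax lam 1 β γ vstar b Δ 0) q1
              - Qsens B Δmax lam 1 β γ vstar b Δ' 0
            ≤ Qsens B Δmax lam 1 β γ vstar b Δ 0
              - Qsens B Δmax lam 1 β γ vstar b Δ' 0 := by
              have := min_le_left (Qsens B Δmax lam 1 β γ vstar b Δ 0) q1; linarith
          _ ≤ γ * D := hq0
      · rw [h]
        have := min_le_right (Qsens B Δmax lam 1 β γ vstar b Δ 0) q1
        linarith [mul_nonneg hg0 hD0]
  -- D ≤ γ D hence D ≤ 0
  have hDγ : D ≤ γ * D := by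
    apply Finset.sup'_le
    intro t ht
    by_cases hv : t.1 ≤ B ∧ 1 ≤ t.2.1 ∧ t.2.1 ≤ t.2.2 ∧ t.2.2 ≤ Δmax
    · have := hkey t.1 t.2.1 t.2.2 hv.1 hv.2.1 hv.2.2.1 hv.2.2.2
      simpa [hf, hv] using this
    · simp [hf, hv]
      exact mul_nonneg hg0 hD0
  have hDle : D ≤ 0 := by nlinarith
  intro b Δ Δ' hb h1 h12 h2
  have := hub b Δ Δ' hb h1 h12 h2
  linarith

/-- With an error-free channel (ξ = 1), the advantage
δq*(b, Δ) = q*((b,Δ),1) − q*((b,Δ),0) is non-increasing in the AoI. -/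
theorem advantage_antitone_in_AoI (B Δmax : ℕ) (hB : 1 ≤ B) (hΔmax : 1 ≤ Δmax)
    (lam β γ : ℝ)
    (hlam : 0 ≤ lam ∧ lam ≤ 1)
    (hβ : 0 ≤ β) (hγ : 0 ≤ γ ∧ γ < 1)
    (vstar : ℕ × ℕ → ℝ)
    (hfix : ∀ b Δ, b ≤ B → 1 ≤ Δ → Δ ≤ Δmax →
      vstar (b, Δ) = min (Qsens B Δmax lam 1 β γ vstar b Δ 0)
        (Qsens B Δmax lam 1 β γ vstar b Δ 1)) :
    ∀ b Δ Δ', b ≤ B → 1 ≤ Δ → Δ ≤ Δ' → Δ' ≤ Δmax →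
      Qsens B Δmax lam 1 β γ vstar b Δ' 1 - Qsens B Δmax lam 1 β γ vstar b Δ' 0
        ≤ Qsens B Δmax lam 1 β γ vstar b Δ 1
          - Qsens B Δmax lam 1 β γ vstar b Δ 0 := by
  have hmono := vstar_mono B Δmax hB hΔmax lam β γ hlam hβ hγ vstar hfix
  obtain ⟨hl0, hl1⟩ := hlam
  obtain ⟨hg0, hg1⟩ := hγ
  intro b Δ Δ' hb h1 h12 h2
  set m : ℕ := min (Δ+1) Δmax with hm
  set m' : ℕ := min (Δ'+1) Δmax with hm'
  have hm1 : 1 ≤ m := by omega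
  have hmm' : m ≤ m' := by omega
  have hm'2 : m' ≤ Δmax := by omega
  have hmr : (m : ℝ) ≤ (m' : ℝ) := by exact_mod_cast hmm'
  have hβm : β * (m:ℝ) ≤ β * (m':ℝ) := mul_le_mul_of_nonneg_left hmr hβ
  rcases Nat.eq_zero_or_pos b with hb0 | hbpos
  · subst hb0
    have hbB : (0:ℕ) < B := hB
    rw [Q1_zero, Q1_zero, Q0_lt B Δmax lam β γ vstar 0 Δ hbB,
        Q0_lt B Δmax lam β γ vstar 0 Δ' hbB]
    norm_num
  · have hbne : b ≠ 0 := by omega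
    rw [Q1_pos B Δmax lam β γ vstar b Δ hbne, Q1_pos B Δmax lam β γ vstar b Δ' hbne]
    have hgoal : Qsens B Δmax lam 1 β γ vstar b Δ 0
        ≤ Qsens B Δmax lam 1 β γ vstar b Δ' 0 := by
      rcases lt_or_eq_of_le hb with hlt | heq
      · rw [Q0_lt B Δmax lam β γ vstar b Δ hlt, Q0_lt B Δmax lam β γ vstar b Δ' hlt]
        have d1 : vstar (b+1, m) ≤ vstar (b+1, m') := hmono (b+1) m m' (by omega) hm1 hmm' hm'2
        have d0 : vstar (b, m) ≤ vstar (b, m') := hmono b m m' hb hm1 hmm' hm'2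
        have e1 : lam * (γ * vstar (b+1, m)) ≤ lam * (γ * vstar (b+1, m')) :=
          mul_le_mul_of_nonneg_left (mul_le_mul_of_nonneg_left d1 hg0) hl0
        have e0 : (1-lam) * (γ * vstar (b, m)) ≤ (1-lam) * (γ * vstar (b, m')) :=
          mul_le_mul_of_nonneg_left (mul_le_mul_of_nonneg_left d0 hg0) (by linarith)
        nlinarith
      · subst heq
        rw [Q0_eq, Q0_eq]
        have d0 : vstar (b, m) ≤ vstar (b, m') := hmono b m m' le_rfl hm1 hmm' hm'2
        nlinarith [mul_le_mul_of_nonneg_left d0 hg0]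
    linarith
end

section
/- In the sensor MDP with error-free channel ξ = 1, any optimal deterministic policy is threshold-based in the AoI: if the optimal action at state (b, Δ) is to command (i.e., q*((b,Δ),1) ≤ q*((b,Δ),0)), then for any Δ̄ ≥ Δ the optimal action at (b, Δ̄) is also to command. -/
lemma Qsens_zero_lt {B Δmax : ℕ} {lam β γ : ℝ} {v : ℕ × ℕ → ℝ} {b Δ : ℕ} (hb : b < B) :
    Qsens B Δmax lam 1 β γ v b Δ 0 =
      lam * (β * ((min (Δ+1) Δmax : ℕ) : ℝ) + γ * v (b+1, min (Δ+1) Δmax))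
        + (1-lam) * (β * ((min (Δ+1) Δmax : ℕ) : ℝ) + γ * v (b, min (Δ+1) Δmax)) := by
  simp [Qsens, hb]

lemma Qsens_zero_top {B Δmax : ℕ} {lam β γ : ℝ} {v : ℕ × ℕ → ℝ} {Δ : ℕ} :
    Qsens B Δmax lam 1 β γ v B Δ 0 =
      β * ((min (Δ+1) Δmax : ℕ) : ℝ) + γ * v (B, min (Δ+1) Δmax) := by
  simp [Qsens]

lemma Qsens_one_zero {B Δmax : ℕ} {lam β γ : ℝ} {v : ℕ × ℕ → ℝ} {Δ : ℕ} :
    Qsens B Δmax lam 1 β γ v 0 Δ 1 =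
      lam * (β * ((min (Δ+1) Δmax : ℕ) : ℝ) + γ * v (1, min (Δ+1) Δmax))
        + (1-lam) * (β * ((min (Δ+1) Δmax : ℕ) : ℝ) + γ * v (0, min (Δ+1) Δmax)) := by
  simp [Qsens]

lemma Qsens_one_pos {B Δmax : ℕ} {lam β γ : ℝ} {v : ℕ × ℕ → ℝ} {b Δ : ℕ} (hb : b ≠ 0) :
    Qsens B Δmax lam 1 β γ v b Δ 1 =
      lam * (β + γ * v (b, 1)) + (1-lam) * (β + γ * v (b-1, 1)) := by
  simp [Qsens, hb]

lemma min_sub_min_le_aux {x y z w c : ℝ} (h1 : x - y ≤ c) (h2 : z - w ≤ c) :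
    min x z - min y w ≤ c := by
  rcases min_cases y w with ⟨h, _⟩ | ⟨h, _⟩
  · have := min_le_left x z; linarith
  · have := min_le_right x z; linarith

/-- With an error-free channel (ξ = 1), an optimal policy is threshold-based
in the AoI: if commanding is optimal at (b, Δ), it is optimal at (b, Δ̄) for
any Δ̄ ≥ Δ. -/
theorem optimal_policy_threshold_in_AoI (B Δmax : ℕ) (hB : 1 ≤ B)
    (hΔmax : 1 ≤ Δmax)
    (lam β γ : ℝ)
    (hlam : 0 ≤ lam ∧ lam ≤ 1)
    (hβ : 0 ≤ β) (hγ : 0 ≤ γ ∧ γ < 1)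
    (vstar : ℕ × ℕ → ℝ)
    (hfix : ∀ b Δ, b ≤ B → 1 ≤ Δ → Δ ≤ Δmax →
      vstar (b, Δ) = min (Qsens B Δmax lam 1 β γ vstar b Δ 0)
        (Qsens B Δmax lam 1 β γ vstar b Δ 1)) :
    ∀ b Δ Δ', b ≤ B → 1 ≤ Δ → Δ ≤ Δ' → Δ' ≤ Δmax →
      Qsens B Δmax lam 1 β γ vstar b Δ 1 ≤ Qsens B Δmax lam 1 β γ vstar b Δ 0 →
      Qsens B Δmax lam 1 β γ vstar b Δ' 1
        ≤ Qsens B Δmax lam 1 β γ vstar b Δ' 0 := by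
  obtain ⟨hlam0, hlam1⟩ := hlam
  obtain ⟨hγ0, hγ1⟩ := hγ
  have hlam1' : (0:ℝ) ≤ 1 - lam := by linarith
  -- finite state set and a crude bound on oscillation of vstar
  have hFne : (Finset.range (B+1) ×ˢ Finset.Icc 1 Δmax).Nonempty :=
    ⟨(0,1), by simp [hΔmax]⟩
  set F : Finset (ℕ × ℕ) := Finset.range (B+1) ×ˢ Finset.Icc 1 Δmax with hF
  set C : ℝ := F.sup' hFne vstar - F.inf' hFne vstar with hCdef
  have hmemF : ∀ b Δ, b ≤ B → 1 ≤ Δ → Δ ≤ Δmax → (b, Δ) ∈ F := by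
    intro b Δ h1 h2 h3
    simp [hF, Nat.lt_succ_of_le h1, h2, h3]
  have hC0 : 0 ≤ C := by
    have h1 := Finset.inf'_le vstar (hmemF 0 1 (by omega) le_rfl hΔmax)
    have h2 := Finset.le_sup' vstar (hmemF 0 1 (by omega) le_rfl hΔmax)
    rw [hCdef]; linarith
  have hbase : ∀ b Δ Δ', b ≤ B → 1 ≤ Δ → Δ ≤ Δ' → Δ' ≤ Δmax →
      vstar (b, Δ) - vstar (b, Δ') ≤ C := by
    intro b Δ Δ' h1 h2 h3 h4
    have ha := Finset.le_sup' vstar (hmemF b Δ h1 h2 (le_trans h3 h4))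
    have hb' := Finset.inf'_le vstar (hmemF b Δ' h1 (le_trans h2 h3) h4)
    rw [hCdef]; linarith
  -- contraction step: oscillation shrinks geometrically
  have key : ∀ n : ℕ, ∀ b Δ Δ', b ≤ B → 1 ≤ Δ → Δ ≤ Δ' → Δ' ≤ Δmax →
      vstar (b, Δ) - vstar (b, Δ') ≤ γ ^ n * C := by
    intro n
    induction n with
    | zero => intro b Δ Δ' h1 h2 h3 h4; simpa using hbase b Δ Δ' h1 h2 h3 h4
    | succ n IH =>
      intro b Δ Δ' h1 h2 h3 h4
      have hm1 : 1 ≤ min (Δ + 1) Δmax := le_min (by omega) hΔmax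
      have hmm' : min (Δ + 1) Δmax ≤ min (Δ' + 1) Δmax := min_le_min (by omega) le_rfl
      have hm'max : min (Δ' + 1) Δmax ≤ Δmax := min_le_right _ _
      have hmR : ((min (Δ + 1) Δmax : ℕ) : ℝ) ≤ ((min (Δ' + 1) Δmax : ℕ) : ℝ) :=
        Nat.cast_le.mpr hmm'
      have hβm : β * ((min (Δ + 1) Δmax : ℕ) : ℝ) ≤ β * ((min (Δ' + 1) Δmax : ℕ) : ℝ) :=
        mul_le_mul_of_nonneg_left hmR hβ
      have hpow' : (0:ℝ) ≤ γ ^ (n+1) * C := mul_nonneg (pow_nonneg hγ0 _) hC0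
      have hps : γ ^ (n+1) * C = lam * (γ * (γ ^ n * C)) + (1 - lam) * (γ * (γ ^ n * C)) := by
        ring
      rw [hfix b Δ h1 h2 (le_trans h3 h4), hfix b Δ' h1 (le_trans h2 h3) h4]
      apply min_sub_min_le_aux
      · -- action 0
        rcases lt_or_eq_of_le h1 with hlt | rfl
        · rw [Qsens_zero_lt hlt, Qsens_zero_lt hlt]
          have d1 := IH (b+1) _ _ (by omega) hm1 hmm' hm'max
          have d2 := IH b _ _ h1 hm1 hmm' hm'max
          have e1 : lam * (γ * (vstar (b+1, min (Δ+1) Δmax) - vstar (b+1, min (Δ'+1) Δmax)))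
              ≤ lam * (γ * (γ ^ n * C)) :=
            mul_le_mul_of_nonneg_left (mul_le_mul_of_nonneg_left d1 hγ0) hlam0
          have e2 : (1-lam) * (γ * (vstar (b, min (Δ+1) Δmax) - vstar (b, min (Δ'+1) Δmax)))
              ≤ (1-lam) * (γ * (γ ^ n * C)) :=
            mul_le_mul_of_nonneg_left (mul_le_mul_of_nonneg_left d2 hγ0) hlam1'
          have hβm1 : lam * (β * ((min (Δ + 1) Δmax : ℕ) : ℝ))
              ≤ lam * (β * ((min (Δ' + 1) Δmax : ℕ) : ℝ)) :=
            mul_le_mul_of_nonneg_left hβm hlam0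
          have hβm2 : (1-lam) * (β * ((min (Δ + 1) Δmax : ℕ) : ℝ))
              ≤ (1-lam) * (β * ((min (Δ' + 1) Δmax : ℕ) : ℝ)) :=
            mul_le_mul_of_nonneg_left hβm hlam1'
          nlinarith [e1, e2, hβm1, hβm2, hps]
        · rw [Qsens_zero_top, Qsens_zero_top]
          have d := IH b _ _ le_rfl hm1 hmm' hm'max
          have e : γ * (vstar (b, min (Δ+1) Δmax) - vstar (b, min (Δ'+1) Δmax))
              ≤ γ * (γ ^ n * C) := mul_le_mul_of_nonneg_left d hγ0
          nlinarith [e, hβm, hps]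
      · -- action 1
        rcases eq_or_ne b 0 with rfl | hb0
        · rw [Qsens_one_zero, Qsens_one_zero]
          have d1 := IH 1 _ _ hB hm1 hmm' hm'max
          have d2 := IH 0 _ _ (by omega) hm1 hmm' hm'max
          have e1 : lam * (γ * (vstar (1, min (Δ+1) Δmax) - vstar (1, min (Δ'+1) Δmax)))
              ≤ lam * (γ * (γ ^ n * C)) :=
            mul_le_mul_of_nonneg_left (mul_le_mul_of_nonneg_left d1 hγ0) hlam0
          have e2 : (1-lam) * (γ * (vstar (0, min (Δ+1) Δmax) - vstar (0, min (Δ'+1) Δmax)))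
              ≤ (1-lam) * (γ * (γ ^ n * C)) :=
            mul_le_mul_of_nonneg_left (mul_le_mul_of_nonneg_left d2 hγ0) hlam1'
          have hβm1 : lam * (β * ((min (Δ + 1) Δmax : ℕ) : ℝ))
              ≤ lam * (β * ((min (Δ' + 1) Δmax : ℕ) : ℝ)) :=
            mul_le_mul_of_nonneg_left hβm hlam0
          have hβm2 : (1-lam) * (β * ((min (Δ + 1) Δmax : ℕ) : ℝ))
              ≤ (1-lam) * (β * ((min (Δ' + 1) Δmax : ℕ) : ℝ)) :=
            mul_le_mul_of_nonneg_left hβm hlam1'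
          nlinarith [e1, e2, hβm1, hβm2, hps]
        · rw [Qsens_one_pos hb0, Qsens_one_pos hb0]
          linarith [hpow']
  -- vstar is nondecreasing in the AoI
  have mono : ∀ b Δ Δ', b ≤ B → 1 ≤ Δ → Δ ≤ Δ' → Δ' ≤ Δmax →
      vstar (b, Δ) ≤ vstar (b, Δ') := by
    intro b Δ Δ' h1 h2 h3 h4
    have hlim : Filter.Tendsto (fun n : ℕ => γ ^ n * C) Filter.atTop (nhds 0) := by
      have h := tendsto_pow_atTop_nhds_zero_of_lt_one hγ0 hγ1
      simpa using h.mul_const C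
    have hle : vstar (b, Δ) - vstar (b, Δ') ≤ 0 :=
      ge_of_tendsto hlim (Filter.Eventually.of_forall fun n => key n b Δ Δ' h1 h2 h3 h4)
    linarith
  -- conclude the threshold property
  intro b Δ Δ' hbB hΔ1 hΔΔ' hΔ'max hcmd
  have hm1 : 1 ≤ min (Δ + 1) Δmax := le_min (by omega) hΔmax
  have hmm' : min (Δ + 1) Δmax ≤ min (Δ' + 1) Δmax := min_le_min (by omega) le_rfl
  have hm'max : min (Δ' + 1) Δmax ≤ Δmax := min_le_right _ _
  have hmR : ((min (Δ + 1) Δmax : ℕ) : ℝ) ≤ ((min (Δ' + 1) Δmax : ℕ) : ℝ) :=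
    Nat.cast_le.mpr hmm'
  have hβm : β * ((min (Δ + 1) Δmax : ℕ) : ℝ) ≤ β * ((min (Δ' + 1) Δmax : ℕ) : ℝ) :=
    mul_le_mul_of_nonneg_left hmR hβ
  rcases eq_or_ne b 0 with rfl | hb0
  · rw [Qsens_one_zero, Qsens_zero_lt (by omega : 0 < B)]
  · -- action value for commanding is constant in Δ
    rw [Qsens_one_pos hb0] at hcmd ⊢
    have hQ0 : Qsens B Δmax lam 1 β γ vstar b Δ 0 ≤ Qsens B Δmax lam 1 β γ vstar b Δ' 0 := by
      rcases lt_or_eq_of_le hbB with hlt | rfl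
      · rw [Qsens_zero_lt hlt, Qsens_zero_lt hlt]
        have d1 := mono (b+1) _ _ (by omega) hm1 hmm' hm'max
        have d2 := mono b _ _ hbB hm1 hmm' hm'max
        have e1 : lam * (γ * vstar (b+1, min (Δ+1) Δmax))
            ≤ lam * (γ * vstar (b+1, min (Δ'+1) Δmax)) :=
          mul_le_mul_of_nonneg_left (mul_le_mul_of_nonneg_left d1 hγ0) hlam0
        have e2 : (1-lam) * (γ * vstar (b, min (Δ+1) Δmax))
            ≤ (1-lam) * (γ * vstar (b, min (Δ'+1) Δmax)) :=
          mul_le_mul_of_nonneg_left (mul_le_mul_of_nonneg_left d2 hγ0) hlam1'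
        have hβm1 : lam * (β * ((min (Δ + 1) Δmax : ℕ) : ℝ))
            ≤ lam * (β * ((min (Δ' + 1) Δmax : ℕ) : ℝ)) :=
          mul_le_mul_of_nonneg_left hβm hlam0
        have hβm2 : (1-lam) * (β * ((min (Δ + 1) Δmax : ℕ) : ℝ))
            ≤ (1-lam) * (β * ((min (Δ' + 1) Δmax : ℕ) : ℝ)) :=
          mul_le_mul_of_nonneg_left hβm hlam1'
        linarith [e1, e2, hβm1, hβm2]
      · rw [Qsens_zero_top, Qsens_zero_top]
        have d := mono b _ _ le_rfl hm1 hmm' hm'max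
        have e : γ * vstar (b, min (Δ+1) Δmax) ≤ γ * vstar (b, min (Δ'+1) Δmax) :=
          mul_le_mul_of_nonneg_left d hγ0
        linarith [e, hβm]
    linarith
end
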